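/- A point x : Fin n → ℝ belongs to Ω if and only if there exist a scenario b with bl ≤ b ≤ bu and a dual vector y : Fin m → ℝ such that A.mulVec x ≤ b, 0 ≤ x, Aᵀ.mulVec y ≤ c, y ≤ 0, and c ⬝ᵥ x = b ⬝ᵥ y (where Aᵀ = A.transpose). That is, the strong-duality system (15) exactly characterizes the optimal set Ω of the interval LP. -/

import Mathlib

open Matrix

/-- Feasible set of the scenario LP: `A x ≤ b`, `x ≥ 0`. -/
def Feas {m n : ℕ} (A : Matrix (Fin m) (Fin n) ℝ) (b : Fin m → ℝ) :
    Set (Fin n → ℝ) :=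
  {x | A.mulVec x ≤ b ∧ 0 ≤ x}

/-- Optimal set of the scenario LP `min c ⬝ᵥ x` over `Feas A b`. -/
def Opt {m n : ℕ} (A : Matrix (Fin m) (Fin n) ℝ) (c : Fin n → ℝ)
    (b : Fin m → ℝ) : Set (Fin n → ℝ) :=
  {x ∈ Feas A b | ∀ y ∈ Feas A b, c ⬝ᵥ x ≤ c ⬝ᵥ y}

/-- Optimal set of the interval LP: union of scenario optimal sets. -/
def Omega {m n : ℕ} (A : Matrix (Fin m) (Fin n) ℝ) (c : Fin n → ℝ)
    (bl bu : Fin m → ℝ) : Set (Fin n → ℝ) :=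
  ⋃ b ∈ Set.Icc bl bu, Opt A c b

section Aux
open Finset


section Carat
variable {ι : Type*} [Fintype ι] [DecidableEq ι] {E : Type*} [AddCommGroup E] [Module ℝ E]

theorem cone_caratheodory (v : ι → E) (s : Finset ι) (a : ι → ℝ)
    (ha : ∀ i, 0 ≤ a i) (hs : ∀ i ∉ s, a i = 0) :
    ∃ (s' : Finset ι) (a' : ι → ℝ), (∀ i, 0 ≤ a' i) ∧ (∀ i ∉ s', a' i = 0) ∧
      (∑ i, a' i • v i = ∑ i, a i • v i) ∧ LinearIndependent ℝ (fun i : s' => v i) := by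
  induction s using Finset.strongInduction generalizing a with
  | _ s IH =>
  by_cases hli : LinearIndependent ℝ (fun i : s => v i)
  · exact ⟨s, a, ha, hs, rfl, hli⟩
  · obtain ⟨g₀, hg₀sum, i₁, hi₁⟩ := Fintype.not_linearIndependent_iff.mp hli
    -- extend g₀ to ι by zero, and WLOG it has a positive entry on s
    have key : ∀ g : ι → ℝ, (∀ i ∉ s, g i = 0) → (∑ i, g i • v i = 0) →
        (∃ i ∈ s, 0 < g i) →
        ∃ (s' : Finset ι) (a' : ι → ℝ), (∀ i, 0 ≤ a' i) ∧ (∀ i ∉ s', a' i = 0) ∧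
          (∑ i, a' i • v i = ∑ i, a i • v i) ∧ LinearIndependent ℝ (fun i : s' => v i) := by
      intro g hgs hgsum ⟨j₀, hj₀s, hj₀⟩
      -- minimize a i / g i over positive entries
      obtain ⟨i₀, hi₀mem, hi₀min⟩ := (s.filter (fun i => 0 < g i)).exists_min_image
        (fun i => a i / g i) ⟨j₀, by simp [hj₀s, hj₀]⟩
      rw [Finset.mem_filter] at hi₀mem
      obtain ⟨hi₀s, hgi₀⟩ := hi₀mem
      set t := a i₀ / g i₀ with ht
      have htnn : 0 ≤ t := div_nonneg (ha i₀) hgi₀.le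
      set a' : ι → ℝ := fun i => a i - t * g i with ha'
      have ha'nn : ∀ i, 0 ≤ a' i := by
        intro i
        by_cases his : i ∈ s
        · by_cases hgi : 0 < g i
          · have := hi₀min i (Finset.mem_filter.mpr ⟨his, hgi⟩)
            simp only [ha', sub_nonneg]
            rw [div_le_div_iff₀ hgi₀ hgi] at this
            calc t * g i = a i₀ / g i₀ * g i := rfl
              _ ≤ a i := by
                rw [div_mul_eq_mul_div, div_le_iff₀ hgi₀]
                linarith [this]
          · have : t * g i ≤ 0 := mul_nonpos_of_nonneg_of_nonpos htnn (not_lt.mp hgi)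
            simp only [ha', sub_nonneg]
            linarith [ha i]
        · simp [ha', hgs i his, hs i his]
      have ha's : ∀ i ∉ s.erase i₀, a' i = 0 := by
        intro i hi
        simp only [Finset.mem_erase, not_and_or, not_not] at hi
        rcases hi with h | h
        · simp only [ha', h, ht]
          field_simp
          simp
        · simp [ha', hs i h, hgs i h]
      have hsum : ∑ i, a' i • v i = ∑ i, a i • v i := by
        have h1 : ∑ x, (t * g x) • v x = t • ∑ x, g x • v x := by
          rw [Finset.smul_sum]
          exact Finset.sum_congr rfl fun i _ => (smul_smul t (g i) (v i)).symm
        simp only [ha', sub_smul, Finset.sum_sub_distrib, h1, hgsum, smul_zero, sub_zero]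
      have herase : s.erase i₀ ⊂ s := Finset.erase_ssubset hi₀s
      exact IH _ herase a' ha'nn ha's |>.imp fun s' h => by
        obtain ⟨a'', h1, h2, h3, h4⟩ := h
        exact ⟨a'', h1, h2, h3.trans hsum, h4⟩
    set g : ι → ℝ := fun i => if h : i ∈ s then g₀ ⟨i, h⟩ else 0 with hg
    have hgs : ∀ i ∉ s, g i = 0 := fun i hi => by simp [hg, hi]
    have hgcoe : ∀ i : {x // x ∈ s}, g ↑i = g₀ i := by
      intro i; simp only [hg, dif_pos i.2]
    have hgsum : ∑ i, g i • v i = 0 := by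
      rw [← hg₀sum]
      rw [← Finset.sum_subset (Finset.subset_univ s) (fun i _ hi => by rw [hgs i hi, zero_smul])]
      rw [← Finset.sum_attach s (fun i => g i • v i)]
      exact Finset.sum_congr rfl fun i _ => by rw [hgcoe]
    by_cases hpos : ∃ i ∈ s, 0 < g i
    · exact key g hgs hgsum hpos
    · push_neg at hpos
      refine key (-g) (fun i hi => by simp [hgs i hi]) ?_ ⟨i₁, i₁.2, ?_⟩
      · simp only [Pi.neg_apply, neg_smul, Finset.sum_neg_distrib, hgsum, neg_zero]
      · have h1 : g ↑i₁ ≠ 0 := by rw [hgcoe]; exact hi₁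
        have h2 : g ↑i₁ ≤ 0 := hpos _ i₁.2
        simpa using lt_of_le_of_ne h2 h1
end Carat

section Cone
open scoped RealInnerProductSpace
variable {ι : Type*} [Fintype ι] [DecidableEq ι] {E : Type*} [NormedAddCommGroup E]
  [InnerProductSpace ℝ E] [FiniteDimensional ℝ E]

/-- The cone of nonnegative combinations of a finite family. -/
def coneSet (v : ι → E) : Set E :=
  {x | ∃ a : ι → ℝ, (∀ i, 0 ≤ a i) ∧ ∑ i, a i • v i = x}

theorem isClosed_coneSet (v : ι → E) : IsClosed (coneSet v) := by
  have main : coneSet v =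
      ⋃ s ∈ {s : Finset ι | LinearIndependent ℝ (fun i : s => v i)},
        {x | ∃ a : ι → ℝ, (∀ i, 0 ≤ a i) ∧ (∀ i ∉ s, a i = 0) ∧ ∑ i, a i • v i = x} := by
    ext x
    simp only [Set.mem_iUnion, Set.mem_setOf_eq]
    constructor
    · rintro ⟨a, ha, rfl⟩
      obtain ⟨s', a', h1, h2, h3, h4⟩ := cone_caratheodory v Finset.univ a ha (by simp)
      exact ⟨s', h4, a', h1, h2, h3⟩
    · rintro ⟨s, _, a, ha, _, rfl⟩
      exact ⟨a, ha, rfl⟩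
  rw [main]
  apply Set.Finite.isClosed_biUnion (Set.toFinite _)
  intro s hli
  simp only [Set.mem_setOf_eq] at hli
  -- the linear map from coefficients on `s`
  set L : ({i // i ∈ s} → ℝ) →ₗ[ℝ] E :=
    { toFun := fun b => ∑ i : {i // i ∈ s}, b i • v ↑i
      map_add' := fun b₁ b₂ => by
        simp [add_smul, Finset.sum_add_distrib]
      map_smul' := fun r b => by
        simp [Finset.smul_sum, smul_smul] } with hL
  have hinj : LinearMap.ker L = ⊥ := by
    rw [LinearMap.ker_eq_bot']
    intro b hb
    have := Fintype.linearIndependent_iff.mp hli b hb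
    funext i; exact this i
  have hce := LinearMap.isClosedEmbedding_of_injective hinj
  have himg : {x : E | ∃ a : ι → ℝ, (∀ i, 0 ≤ a i) ∧ (∀ i ∉ s, a i = 0) ∧ ∑ i, a i • v i = x}
      = L '' {b | ∀ i, 0 ≤ b i} := by
    ext x
    simp only [Set.mem_setOf_eq, Set.mem_image, hL, LinearMap.coe_mk, AddHom.coe_mk]
    constructor
    · rintro ⟨a, ha, hz, rfl⟩
      refine ⟨fun i => a ↑i, fun i => ha ↑i, ?_⟩
      rw [← Finset.sum_subset (Finset.subset_univ s) (fun i _ hi => by rw [hz i hi, zero_smul]),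
        ← Finset.sum_attach s (fun i => a i • v i)]
      simp only [LinearMap.coe_mk, AddHom.coe_mk, Finset.univ_eq_attach]
    · rintro ⟨b, hb, rfl⟩
      refine ⟨fun i => if h : i ∈ s then b ⟨i, h⟩ else 0, fun i => ?_, fun i hi => dif_neg hi, ?_⟩
      · dsimp only
        by_cases h : i ∈ s
        · rw [dif_pos h]; exact hb _
        · rw [dif_neg h]
      · rw [← Finset.sum_subset (Finset.subset_univ s)
          (fun i _ hi => by simp only [dif_neg hi, zero_smul]),
          ← Finset.sum_attach s (fun i => (if h : i ∈ s then b ⟨i, h⟩ else 0) • v i)]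
        simp only [LinearMap.coe_mk, AddHom.coe_mk, Finset.univ_eq_attach]
        exact Finset.sum_congr rfl fun i _ => by simp only [dif_pos i.2]
  rw [himg]
  apply hce.isClosedMap
  have : {b : {i // i ∈ s} → ℝ | ∀ i, 0 ≤ b i} = ⋂ i, {b | 0 ≤ b i} := by
    ext b; simp [Set.mem_iInter]
  rw [this]
  exact isClosed_iInter fun i => isClosed_le continuous_const (continuous_apply i)

/-- Farkas-type alternative from closed-cone separation. -/
theorem farkas_cone (v : ι → E) (w : E) :
    (∃ a : ι → ℝ, (∀ i, 0 ≤ a i) ∧ ∑ i, a i • v i = w) ∨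
    (∃ y : E, (∀ i, 0 ≤ ⟪v i, y⟫) ∧ ⟪y, w⟫ < 0) := by
  by_cases hw : w ∈ coneSet v
  · exact Or.inl hw
  · right
    set K : ConvexCone ℝ E :=
      { carrier := coneSet v
        smul_mem' := fun c hc x hx => by
          obtain ⟨a, ha, rfl⟩ := hx
          exact ⟨fun i => c * a i, fun i => mul_nonneg hc.le (ha i), by
            rw [Finset.smul_sum]; exact Finset.sum_congr rfl fun i _ => (smul_smul c (a i) (v i)).symm⟩
        add_mem' := fun x hx y hy => by
          obtain ⟨a, ha, rfl⟩ := hx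
          obtain ⟨b, hb, rfl⟩ := hy
          exact ⟨fun i => a i + b i, fun i => add_nonneg (ha i) (hb i), by
            simp [add_smul, Finset.sum_add_distrib]⟩ } with hK
    have hne : (K : Set E).Nonempty := ⟨0, ⟨fun _ => 0, fun _ => le_refl _, by simp⟩⟩
    obtain ⟨y, hy1, hy2⟩ := ProperCone.hyperplane_separation' (x₀ := w)
      { carrier := coneSet v
        add_mem' := fun hx hy => K.add_mem' hx hy
        zero_mem' := ⟨fun _ => 0, fun _ => le_refl _, by simp⟩
        smul_mem' := fun c x hx => by
          obtain ⟨a, ha, rfl⟩ := hx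
          exact ⟨fun i => (c : ℝ) * a i, fun i => mul_nonneg c.2 (ha i), by
            rw [Finset.smul_sum]
            exact Finset.sum_congr rfl fun i _ => by rw [← smul_smul]; rfl⟩
        isClosed' := isClosed_coneSet v } hw
    refine ⟨y, fun i => ?_, by rwa [real_inner_comm]⟩
    apply hy1
    exact ⟨fun j => if j = i then 1 else 0, fun j => by positivity, by
      simp [ite_smul, Finset.sum_ite_eq']⟩
end Cone

section MatrixFarkas
open scoped RealInnerProductSpace

theorem euclid_sum_apply {ι κ : Type*} [Fintype ι] [Fintype κ]
    (f : ι → EuclideanSpace ℝ κ) (k : κ) : (∑ i, f i) k = ∑ i, f i k := by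
  simp [WithLp.ofLp_sum]

theorem farkas_matrix {ι κ : Type*} [Fintype ι] [Fintype κ] [DecidableEq ι] [DecidableEq κ]
    (M : Matrix κ ι ℝ) (w : κ → ℝ) :
    (∃ z : ι → ℝ, 0 ≤ z ∧ M.mulVec z ≤ w) ∨
    (∃ u : κ → ℝ, 0 ≤ u ∧ 0 ≤ Mᵀ.mulVec u ∧ w ⬝ᵥ u < 0) := by
  set v : ι ⊕ κ → EuclideanSpace ℝ κ :=
    Sum.elim (fun j => (WithLp.toLp 2 (fun k => M k j) : EuclideanSpace ℝ κ))
      (fun k => EuclideanSpace.single k 1) with hv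
  have hw' : (WithLp.toLp 2 w : EuclideanSpace ℝ κ) = WithLp.toLp 2 w := rfl
  rcases farkas_cone v (WithLp.toLp 2 w : EuclideanSpace ℝ κ) with ⟨a, ha, hsum⟩ | ⟨y, hy1, hy2⟩
  · left
    refine ⟨fun j => a (Sum.inl j), fun j => ha _, fun k => ?_⟩
    have := congrArg (fun p : EuclideanSpace ℝ κ => p k) hsum
    rw [euclid_sum_apply] at this
    rw [Fintype.sum_sum_type] at this
    simp only [hv, Sum.elim_inl, Sum.elim_inr, PiLp.smul_apply, smul_eq_mul,
      EuclideanSpace.single_apply, PiLp.toLp_apply] at this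
    have h2 : ∑ x : κ, a (Sum.inr x) * (if k = x then 1 else 0) = a (Sum.inr k) := by simp
    rw [h2] at this
    have h3 : (M *ᵥ fun j => a (Sum.inl j)) k = ∑ x : ι, a (Sum.inl x) * M k x := by
      simp [Matrix.mulVec, dotProduct, mul_comm]
    rw [h3]
    linarith [ha (Sum.inr k)]
  · right
    refine ⟨y, fun k => ?_, fun j => ?_, ?_⟩
    · have := hy1 (Sum.inr k)
      simpa [hv, EuclideanSpace.inner_single_left] using this
    · have := hy1 (Sum.inl j)
      simp only [hv, Sum.elim_inl, PiLp.inner_apply, RCLike.inner_apply, conj_trivial] at this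
      simpa [Matrix.mulVec, Matrix.transpose_apply, dotProduct, mul_comm] using this
    · simp only [PiLp.inner_apply, RCLike.inner_apply, conj_trivial] at hy2
      simpa [dotProduct, mul_comm] using hy2
end MatrixFarkas

section Main
variable {m n : ℕ}

theorem weak_duality (A : Matrix (Fin m) (Fin n) ℝ) (b : Fin m → ℝ) (c : Fin n → ℝ)
    (x : Fin n → ℝ) (y : Fin m → ℝ) (hx : A.mulVec x ≤ b) (hx0 : 0 ≤ x)
    (hy : Aᵀ.mulVec y ≤ c) (hy0 : y ≤ 0) : b ⬝ᵥ y ≤ c ⬝ᵥ x := by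
  have h1 : b ⬝ᵥ y ≤ (A.mulVec x) ⬝ᵥ y := by
    apply Finset.sum_le_sum
    intro k _
    exact mul_le_mul_of_nonpos_right (hx k) (hy0 k)
  have h2 : (A.mulVec x) ⬝ᵥ y = x ⬝ᵥ (Aᵀ.mulVec y) := by
    simp only [dotProduct, Matrix.mulVec, Matrix.transpose_apply, Finset.sum_mul, Finset.mul_sum]
    rw [Finset.sum_comm]
    exact Finset.sum_congr rfl fun j _ => Finset.sum_congr rfl fun k _ => by ring
  have h3 : x ⬝ᵥ (Aᵀ.mulVec y) ≤ x ⬝ᵥ c := by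
    apply Finset.sum_le_sum
    intro j _
    exact mul_le_mul_of_nonneg_left (hy j) (hx0 j)
  rw [dotProduct_comm c x]
  linarith

theorem exists_dual_of_opt (A : Matrix (Fin m) (Fin n) ℝ) (c : Fin n → ℝ)
    (b : Fin m → ℝ) (x : Fin n → ℝ)
    (hfeas : A.mulVec x ≤ b ∧ 0 ≤ x)
    (hopt : ∀ z, A.mulVec z ≤ b ∧ 0 ≤ z → c ⬝ᵥ x ≤ c ⬝ᵥ z) :
    ∃ y : Fin m → ℝ, Aᵀ.mulVec y ≤ c ∧ y ≤ 0 ∧ c ⬝ᵥ x = b ⬝ᵥ y := by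
  set M : Matrix (Fin n ⊕ Unit) (Fin m) ℝ :=
    Matrix.of (fun r k => Sum.elim (fun j => -A k j) (fun _ => b k) r) with hM
  set w : (Fin n ⊕ Unit) → ℝ := Sum.elim c (fun _ => -(c ⬝ᵥ x)) with hw
  rcases farkas_matrix M w with ⟨z, hz0, hMz⟩ | ⟨u, hu0, hMtu, hwu⟩
  · refine ⟨-z, fun j => ?_, fun k => by simpa using hz0 k, ?_⟩
    · have := hMz (Sum.inl j)
      simp only [hM, hw, Matrix.mulVec, dotProduct, Matrix.of_apply, Sum.elim_inl] at this ⊢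
      simp only [Matrix.transpose_apply, Pi.neg_apply]
      calc ∑ k, A k j * (-z k) = ∑ k, -A k j * z k := by
            exact Finset.sum_congr rfl fun k _ => by ring
        _ ≤ c j := this
    · have hub := hMz (Sum.inr ())
      simp only [hM, hw, Matrix.mulVec, dotProduct, Matrix.of_apply, Sum.elim_inr] at hub
      have h1 : c ⬝ᵥ x ≤ b ⬝ᵥ (-z) := by
        simp only [dotProduct, Pi.neg_apply]
        have : ∑ k, b k * -z k = -(∑ k, b k * z k) := by
          rw [← Finset.sum_neg_distrib]; exact Finset.sum_congr rfl fun k _ => by ring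
        rw [this]
        linarith
      have h2 : b ⬝ᵥ (-z) ≤ c ⬝ᵥ x := by
        apply weak_duality A b c x (-z) hfeas.1 hfeas.2 _ (fun k => by simpa using hz0 k)
        intro j
        have := hMz (Sum.inl j)
        simp only [hM, hw, Matrix.mulVec, dotProduct, Matrix.of_apply, Sum.elim_inl] at this
        simp only [Matrix.mulVec, dotProduct, Matrix.transpose_apply, Pi.neg_apply]
        calc ∑ k, A k j * (-z k) = ∑ k, -A k j * z k := by
              exact Finset.sum_congr rfl fun k _ => by ring
          _ ≤ c j := this
      linarith
  · exfalso
    set d : Fin n → ℝ := fun j => u (Sum.inl j) with hd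
    set t : ℝ := u (Sum.inr ()) with htdef
    have ht0 : 0 ≤ t := hu0 _
    have hAd : ∀ k, (A.mulVec d) k ≤ t * b k := by
      intro k
      have := hMtu k
      simp only [hM, Matrix.mulVec, dotProduct, Matrix.transpose_apply, Matrix.of_apply,
        Fintype.sum_sum_type, Sum.elim_inl, Sum.elim_inr, Finset.univ_unique,
        Finset.sum_singleton, Pi.zero_apply] at this
      simp only [Matrix.mulVec, dotProduct]
      have heq : ∑ j, -A k j * d j = -(∑ j, A k j * d j) := by
        rw [← Finset.sum_neg_distrib]; exact Finset.sum_congr rfl fun j _ => by ring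
      rw [heq] at this
      linarith [this]
    have hcd : c ⬝ᵥ d < t * (c ⬝ᵥ x) := by
      simp only [hw, dotProduct, Fintype.sum_sum_type, Sum.elim_inl, Sum.elim_inr,
        Finset.univ_unique, Finset.sum_singleton] at hwu
      simp only [dotProduct]
      nlinarith [hwu]
    rcases eq_or_lt_of_le ht0 with ht | ht
    · -- t = 0 : unbounded direction
      have hA : A.mulVec (x + d) ≤ b := by
        intro k
        have h1 := hAd k
        rw [← ht] at h1
        have : A.mulVec (x + d) k = A.mulVec x k + A.mulVec d k := by
          simp [Matrix.mulVec_add]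
        rw [this]
        have := hfeas.1 k
        simp only [zero_mul] at h1
        linarith
      have hx0' : 0 ≤ x + d := fun j => add_nonneg (hfeas.2 j) (hu0 (Sum.inl j))
      have := hopt (x + d) ⟨hA, hx0'⟩
      rw [dotProduct_add] at this
      rw [← ht] at hcd
      simp only [zero_mul] at hcd
      linarith
    · -- t > 0 : rescale
      set x' : Fin n → ℝ := t⁻¹ • d with hx'
      have hA : A.mulVec x' ≤ b := by
        intro k
        have : A.mulVec x' k = t⁻¹ * A.mulVec d k := by
          simp [hx', Matrix.mulVec_smul, smul_eq_mul]
        rw [this]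
        have h1 := hAd k
        rw [inv_mul_le_iff₀ ht]
        linarith [h1]
      have hx0' : 0 ≤ x' := fun j => mul_nonneg (inv_nonneg.mpr ht0) (hu0 (Sum.inl j))
      have hval : c ⬝ᵥ x' < c ⬝ᵥ x := by
        have : c ⬝ᵥ x' = t⁻¹ * (c ⬝ᵥ d) := by
          simp [hx', dotProduct, Finset.mul_sum]
          exact Finset.sum_congr rfl fun j _ => by ring
        rw [this]
        rw [inv_mul_lt_iff₀ ht]
        linarith [hcd]
      have := hopt x' ⟨hA, hx0'⟩
      linarith
end Main


end Aux

theorem strong_duality_characterization_of_optimal_set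
    (m n : ℕ) (A : Matrix (Fin m) (Fin n) ℝ) (c : Fin n → ℝ)
    (bl bu : Fin m → ℝ) (hb : bl ≤ bu) (x : Fin n → ℝ) :
    x ∈ Omega A c bl bu ↔
      ∃ b : Fin m → ℝ, bl ≤ b ∧ b ≤ bu ∧
        ∃ y : Fin m → ℝ,
          A.mulVec x ≤ b ∧ 0 ≤ x ∧
          Aᵀ.mulVec y ≤ c ∧ y ≤ 0 ∧
          c ⬝ᵥ x = b ⬝ᵥ y := by
  constructor
  · intro hx
    simp only [Omega, Set.mem_iUnion] at hx
    obtain ⟨b, ⟨hbl, hbu⟩, hopt⟩ := hx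
    obtain ⟨⟨hAx, hx0⟩, hmin⟩ := hopt
    obtain ⟨y, hy1, hy2, hy3⟩ := exists_dual_of_opt A c b x ⟨hAx, hx0⟩ (fun z hz => hmin z hz)
    exact ⟨b, hbl, hbu, y, hAx, hx0, hy1, hy2, hy3⟩
  · rintro ⟨b, hbl, hbu, y, hAx, hx0, hAty, hy0, heq⟩
    simp only [Omega, Set.mem_iUnion]
    refine ⟨b, ⟨hbl, hbu⟩, ⟨⟨hAx, hx0⟩, ?_⟩⟩
    rintro z ⟨hAz, hz0⟩
    calc c ⬝ᵥ x = b ⬝ᵥ y := heq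
      _ ≤ c ⬝ᵥ z := weak_duality A b c z y hAz hz0 hAty hy0
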